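/- arXiv:1609.09394 — 2 statements merged into one kernel-verified Lean document; each statement's English description precedes it below -/
import Mathlib

section
/- Let J : ℝ → ℝ be a positive differentiable function and let C > 0, A > 0 be constants with J'(t) ≤ -J(t)³/A² + C·J(t) for all t ≥ 0. Then limsup_{t→∞} J(t) ≤ √C · A. -/
open Filter Set Real

/-- At any point `t ≥ 0` where `J t ≥ b > √C·A`, the derivative is at most `-η < 0`. -/
lemma deriv_neg_of_big (J : ℝ → ℝ) (C A b : ℝ) (hC : 0 < C) (hA : 0 < A)
    (hb : Real.sqrt C * A < b)
    (hineq : ∀ t, 0 ≤ t → deriv J t ≤ -(J t)^3 / A^2 + C * J t)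
    (hpos : ∀ t, 0 < J t)
    {t : ℝ} (ht : 0 ≤ t) (hJt : b ≤ J t) :
    deriv J t ≤ b * (C - b^2 / A^2) := by
  have hb0 : 0 < b := lt_of_le_of_lt (by positivity) hb
  have hb2 : C * A^2 < b^2 := by
    have h1 : (Real.sqrt C * A)^2 < b^2 := by
      apply sq_lt_sq' _ hb
      nlinarith [Real.sqrt_nonneg C, hb]
    have : (Real.sqrt C * A)^2 = C * A^2 := by
      rw [mul_pow, Real.sq_sqrt hC.le]
    linarith
  have hJpos := hpos t
  have key : deriv J t ≤ J t * (C - (J t)^2 / A^2) := by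
    have := hineq t ht
    have : -(J t)^3 / A^2 + C * J t = J t * (C - (J t)^2 / A^2) := by
      field_simp; ring
    linarith [hineq t ht, this ▸ hineq t ht]
  have hneg : C - (J t)^2 / A^2 ≤ C - b^2 / A^2 := by
    have : b^2 ≤ (J t)^2 := by nlinarith
    have hA2 : (0:ℝ) < A^2 := by positivity
    gcongr
  have hCb : C - b^2 / A^2 < 0 := by
    have hA2 : (0:ℝ) < A^2 := by positivity
    rw [sub_neg, lt_div_iff₀ hA2]; linarith
  calc deriv J t ≤ J t * (C - (J t)^2 / A^2) := key
    _ ≤ J t * (C - b^2 / A^2) := by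
        apply mul_le_mul_of_nonneg_left hneg hJpos.le
    _ ≤ b * (C - b^2 / A^2) := by
        apply mul_le_mul_of_nonpos_right hJt hCb.le

/-- ODE comparison: if `J > 0` is differentiable with
`J' ≤ -J³/A² + C·J` for all `t ≥ 0` (`A, C > 0`), then
`limsup_{t→∞} J(t) ≤ √C · A`. -/
theorem stmt1 (J : ℝ → ℝ) (C A : ℝ) (hC : 0 < C) (hA : 0 < A)
    (hJ : Differentiable ℝ J) (hpos : ∀ t, 0 < J t)
    (hineq : ∀ t, 0 ≤ t → deriv J t ≤ -(J t)^3 / A^2 + C * J t) :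
    Filter.limsup J Filter.atTop ≤ Real.sqrt C * A := by
  have hcobdd : IsCoboundedUnder (· ≤ ·) atTop J :=
    isCoboundedUnder_le_of_eventually_le (x := 0) atTop
      (Eventually.of_forall fun t => (hpos t).le)
  -- It suffices to show limsup ≤ √C·A + ε for every ε > 0
  apply le_of_forall_pos_le_add
  intro ε hε
  set b := Real.sqrt C * A + ε with hbdef
  have hb : Real.sqrt C * A < b := by simp [hbdef]; linarith
  have hb0 : 0 < b := lt_of_le_of_lt (by positivity) hb
  set η := b * (C - b^2 / A^2) with hηdef
  have hηneg : η < 0 := by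
    have hb2 : C * A^2 < b^2 := by
      have h1 : (Real.sqrt C * A)^2 < b^2 := by
        apply sq_lt_sq' _ hb
        nlinarith [Real.sqrt_nonneg C, hb, mul_nonneg (Real.sqrt_nonneg C) hA.le]
      have h2 : (Real.sqrt C * A)^2 = C * A^2 := by
        rw [mul_pow, Real.sq_sqrt hC.le]
      linarith
    have hA2 : (0:ℝ) < A^2 := by positivity
    have : C - b^2 / A^2 < 0 := by rw [sub_neg, lt_div_iff₀ hA2]; linarith
    exact mul_neg_of_pos_of_neg hb0 this
  have hderiv : ∀ t, 0 ≤ t → b ≤ J t → deriv J t ≤ η :=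
    fun t ht hJt => deriv_neg_of_big J C A b hC hA hb hineq hpos ht hJt
  -- Step 1: there exists t₀ ≥ 0 with J t₀ ≤ b
  have step1 : ∃ t₀, 0 ≤ t₀ ∧ J t₀ ≤ b := by
    by_contra h
    push_neg at h
    -- J t > b for all t ≥ 0, so deriv J ≤ η on [0,∞)
    have hmono : AntitoneOn (fun t => J t - η * t) (Ici (0:ℝ)) := by
      apply antitoneOn_of_deriv_nonpos (convex_Ici 0)
      · exact (hJ.continuous.sub (continuous_const.mul continuous_id)).continuousOn
      · intro t ht
        exact ((hJ t).sub (by fun_prop)).differentiableWithinAt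
      · intro t ht
        rw [interior_Ici] at ht
        have hd : HasDerivAt (fun t => J t - η * t) (deriv J t - η * 1) t :=
          (hJ t).hasDerivAt.sub ((hasDerivAt_id t).const_mul η)
        rw [hd.deriv]
        have := hderiv t (le_of_lt ht) (h t (le_of_lt ht)).le
        linarith
    have hne : (0:ℝ) < -η := by linarith
    have hT0 : (0:ℝ) ≤ (J 0 + 1) / (-η) := div_nonneg (by linarith [hpos 0]) hne.le
    have hmt := hmono (mem_Ici.2 le_rfl) (mem_Ici.2 hT0) hT0
    simp only [mul_zero, sub_zero] at hmt
    have hηdiv : η * ((J 0 + 1) / (-η)) = -(J 0 + 1) := by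
      field_simp [hηneg.ne]
    nlinarith [hpos ((J 0 + 1) / (-η)), hpos 0]
  obtain ⟨t₀, ht₀, hJt₀⟩ := step1
  -- Step 2: J t ≤ b for all t ≥ t₀ via the fencing theorem
  have step2 : ∀ t, t₀ ≤ t → J t ≤ b := by
    intro t ht
    have := image_le_of_deriv_right_lt_deriv_boundary (f := J) (f' := deriv J)
      (a := t₀) (b := t) (B := fun _ => b) (B' := fun _ => 0)
      (hJ.continuous.continuousOn)
      (fun x _ => (hJ x).hasDerivAt.hasDerivWithinAt)
      hJt₀ (fun x => hasDerivAt_const x b)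
      (fun x hx hxb => by
        have hx0 : 0 ≤ x := le_trans ht₀ hx.1
        have := hderiv x hx0 (le_of_eq hxb.symm)
        show deriv J x < 0
        linarith)
    exact this ⟨ht, le_rfl⟩
  -- Conclude: limsup ≤ b
  have : limsup J atTop ≤ b := by
    apply limsup_le_of_le hcobdd
    filter_upwards [eventually_ge_atTop t₀] with t ht
    exact step2 t ht
  simpa [hbdef] using this
end

section
/- Let λ ≤ -1/4 and let J : ℝ → ℝ be a nonnegative differentiable function satisfying J'(t) ≤ 2(λ + 1/4)J(t) - (2/L)J(t)² for all t ≥ 0 with L > 0. Then J(t) → 0 as t → ∞. -/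
/-- If `λ ≤ -1/4` and the nonnegative differentiable `J` satisfies
`J' ≤ 2(λ + 1/4) J - (2/L) J²` for `t ≥ 0` (`L > 0`), then `J(t) → 0`. -/
theorem stmt2 (J : ℝ → ℝ) (lam L : ℝ) (hlam : lam ≤ -(1/4)) (hL : 0 < L)
    (hJ : Differentiable ℝ J) (hnn : ∀ t, 0 ≤ J t)
    (hineq : ∀ t, 0 ≤ t →
      deriv J t ≤ 2 * (lam + 1/4) * J t - (2 / L) * (J t)^2) :
    Filter.Tendsto J Filter.atTop (nhds 0) := by
  have hlam' : lam + 1/4 ≤ 0 := by linarith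
  -- deriv J ≤ 0 on [0,∞)
  have hd0 : ∀ t, 0 ≤ t → deriv J t ≤ 0 := by
    intro t ht
    have h1 := hineq t ht
    have h2 : 2 * (lam + 1/4) * J t ≤ 0 :=
      mul_nonpos_of_nonpos_of_nonneg (by linarith) (hnn t)
    have h3 : 0 ≤ (2 / L) * (J t)^2 := by positivity
    linarith
  have hA : AntitoneOn J (Set.Ici 0) := by
    apply antitoneOn_of_deriv_nonpos (convex_Ici 0) hJ.continuous.continuousOn
      hJ.differentiableOn
    intro x hx
    exact hd0 x (le_of_lt (by simpa using hx))
  set g : ℝ → ℝ := fun t => J (max t 0) with hg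
  have hgA : Antitone g := by
    intro a b hab
    exact hA (Set.mem_Ici.2 (le_max_right a 0)) (Set.mem_Ici.2 (le_max_right b 0))
      (max_le_max hab le_rfl)
  have hbdd : BddBelow (Set.range g) := by
    refine ⟨0, ?_⟩
    rintro x ⟨t, rfl⟩
    exact hnn _
  set c : ℝ := ⨅ t, g t with hc
  have hgc : Filter.Tendsto g Filter.atTop (nhds c) := tendsto_atTop_ciInf hgA hbdd
  have hceq : J =ᶠ[Filter.atTop] g := by
    filter_upwards [Filter.eventually_ge_atTop (0:ℝ)] with t ht
    simp [hg, max_eq_left ht]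
  have hJc : Filter.Tendsto J Filter.atTop (nhds c) := hgc.congr' hceq.symm
  have hc0 : 0 ≤ c := le_ciInf fun t => hnn _
  have hcle : ∀ t, 0 ≤ t → c ≤ J t := by
    intro t ht
    have := ciInf_le hbdd t
    simpa [hg, max_eq_left ht] using this
  -- show c = 0
  rcases eq_or_lt_of_le hc0 with h | hcpos
  · rwa [← h] at hJc
  · exfalso
    set k : ℝ := (2 / L) * c ^ 2 with hk
    have hkpos : 0 < k := by positivity
    set h : ℝ → ℝ := fun t => J t + k * t with hh
    have hhd : Differentiable ℝ h := hJ.add (differentiable_id.const_mul k)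
    have hderiv : ∀ t, deriv h t = deriv J t + k := by
      intro t
      have := ((hJ t).hasDerivAt.add (((hasDerivAt_id t).const_mul k))).deriv
      exact (by simpa using this : deriv (J + fun y => k * y) t = deriv J t + k)
    have hhA : AntitoneOn h (Set.Ici 0) := by
      apply antitoneOn_of_deriv_nonpos (convex_Ici 0) hhd.continuous.continuousOn
        hhd.differentiableOn
      intro x hx
      have hx0 : (0:ℝ) ≤ x := le_of_lt (by simpa using hx)
      rw [hderiv]
      have h1 := hineq x hx0
      have h2 : 2 * (lam + 1/4) * J x ≤ 0 :=
        mul_nonpos_of_nonpos_of_nonneg (by linarith) (hnn x)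
      have h3 : c ≤ J x := hcle x hx0
      have h4 : c ^ 2 ≤ (J x) ^ 2 := by nlinarith
      have h5 : (2 / L) * c ^ 2 ≤ (2 / L) * (J x) ^ 2 :=
        mul_le_mul_of_nonneg_left h4 (by positivity)
      simp only [hk]
      linarith
    set T : ℝ := (J 0) / k + 1 with hT
    have hT0 : 0 ≤ T := by
      have h1 : 0 ≤ J 0 / k := div_nonneg (hnn 0) hkpos.le
      simp only [hT]; linarith
    have hle : h T ≤ h 0 := hhA (Set.mem_Ici.2 le_rfl) (Set.mem_Ici.2 hT0) hT0
    have hJT := hnn T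
    have hkT : k * T = J 0 + k := by
      rw [hT, mul_add, mul_one, mul_div_cancel₀ (J 0) hkpos.ne']
    simp only [hh] at hle
    nlinarith
end
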